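/- Cyclic equalizability is invariant under simultaneous insertion: if u', v' are obtained from equal-length words u, v by a simultaneous insertion, then u and v are cyclically equalizable if and only if u' and v' are cyclically equalizable. -/

import Mathlib

/-- Interleave insertion strings `ss = [s₀, …, sₙ]` with the letters of `w = [w₀, …, w_{n-1}]`,
producing `s₀ w₀ s₁ w₁ ⋯ s_{n-1} w_{n-1} sₙ`. -/
def interleave {α : Type*} : List (List α) → List α → List α
  | [], _ => []
  | s :: _, [] => s
  | s :: ss, a :: w => s ++ a :: interleave ss w

/-- `u` and `v` are cyclically equalizable: some simultaneous insertion transforms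
them into rotations of each other. -/
def CyclicallyEqualizable {α : Type*} (u v : List α) : Prop :=
  ∃ ss : List (List α), ss.length = u.length + 1 ∧
    (interleave ss u).IsRotated (interleave ss v)

namespace StmtAux

variable {α : Type*}

theorem interleave_length : ∀ (w : List α) (ss : List (List α)),
    ss.length = w.length + 1 →
    (interleave ss w).length = (ss.map List.length).sum + w.length
  | [], [s], _ => by simp [interleave]
  | a :: w, s :: ss, h => by
    have h' : ss.length = w.length + 1 := by simpa using h
    simp [interleave, interleave_length w ss h']
    omega

theorem interleave_split : ∀ (s : List α) (D₁ D₂ : List (List α)) (a : α) (rest : List α),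
    D₁.length = s.length + 1 →
    interleave (D₁ ++ D₂) (s ++ a :: rest) =
      interleave D₁ s ++ a :: interleave D₂ rest
  | [], [d], D₂, a, rest, _ => by simp [interleave]
  | c :: s, d :: D₁, D₂, a, rest, h => by
    have h' : D₁.length = s.length + 1 := by simpa using h
    simp [interleave, interleave_split s D₁ D₂ a rest h']

/-- Composition of simultaneous insertions. -/
def comp : List (List α) → List (List α) → List (List α)
  | _, [] => []
  | D, s :: ss => interleave (D.take (s.length + 1)) s :: comp (D.drop (s.length + 1)) ss

theorem comp_length : ∀ (D ss : List (List α)), (comp D ss).length = ss.length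
  | _, [] => rfl
  | D, s :: ss => by simp [comp, comp_length _ ss]

theorem comp_spec : ∀ (w : List α) (ss D : List (List α)),
    ss.length = w.length + 1 →
    D.length = (interleave ss w).length + 1 →
    interleave D (interleave ss w) = interleave (comp D ss) w
  | [], [s], D, _, hD => by
    have : D.take (s.length + 1) = D := by
      apply List.take_of_length_le
      simp [interleave] at hD
      omega
    simp [interleave, comp, this]
  | a :: w, s :: ss, D, h, hD => by
    have h' : ss.length = w.length + 1 := by simpa using h
    have hlen : (interleave (s :: ss) (a :: w)).length
        = s.length + 1 + (interleave ss w).length := by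
      simp [interleave]; omega
    have htake : (D.take (s.length + 1)).length = s.length + 1 := by
      rw [List.length_take]
      omega
    have hdrop : (D.drop (s.length + 1)).length = (interleave ss w).length + 1 := by
      rw [List.length_drop]
      omega
    calc interleave D (interleave (s :: ss) (a :: w))
        = interleave (D.take (s.length + 1) ++ D.drop (s.length + 1))
            (s ++ a :: interleave ss w) := by
          rw [List.take_append_drop]; rfl
      _ = interleave (D.take (s.length + 1)) s ++
            a :: interleave (D.drop (s.length + 1)) (interleave ss w) :=
          interleave_split _ _ _ _ _ htake
      _ = interleave (D.take (s.length + 1)) s ++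
            a :: interleave (comp (D.drop (s.length + 1)) ss) w := by
          rw [comp_spec w ss _ h' hdrop]
      _ = interleave (comp D (s :: ss)) (a :: w) := by
          simp [comp, interleave]

/-- A block of insertion strings realizing `A ++ s ++ B` around the letters of `s`. -/
def blk (A B : List α) : List α → List (List α)
  | [] => [A ++ B]
  | _ :: r => A :: (List.replicate r.length [] ++ [B])

theorem blk_length (A B : List α) (s : List α) : (blk A B s).length = s.length + 1 := by
  cases s <;> simp [blk]

theorem interleave_rep : ∀ (s B : List α),
    interleave (List.replicate s.length ([] : List α) ++ [B]) s = s ++ B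
  | [], B => by simp [interleave]
  | c :: s, B => by simp [interleave, List.replicate_succ, interleave_rep s B]

theorem interleave_blk (A B s : List α) : interleave (blk A B s) s = A ++ s ++ B := by
  cases s with
  | nil => simp [blk, interleave]
  | cons c r => simp [blk, interleave, interleave_rep r B]

section Deco

variable (Glo Ghi : List α)

/-- Decorate every letter of `t` with `Glo` in front and `Ghi` behind. -/
def dec (t : List α) : List α := (t.map fun x => Glo ++ x :: Ghi).flatten

/-- tail part of the insertion list realizing the decoration. -/
def goSS : List (List α) → List (List α)
  | [] => []
  | [t] => [Ghi ++ dec Glo Ghi t]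
  | t :: ts@(_ :: _) => (Ghi ++ dec Glo Ghi t ++ Glo) :: goSS ts

theorem goSS_tail : ∀ (w : List α) (ts : List (List α)),
    ts.length = w.length + 1 →
    Ghi ++ ((interleave ts w).map fun x => Glo ++ x :: Ghi).flatten
      = interleave (goSS Glo Ghi ts) w
  | [], [t], _ => by simp [interleave, goSS, dec]
  | a :: w, t :: ts, h => by
    have h' : ts.length = w.length + 1 := by simpa using h
    obtain ⟨t₂, ts₂, rfl⟩ : ∃ t₂ ts₂, ts = t₂ :: ts₂ := by
      cases ts with
      | nil => simp at h'
      | cons t₂ ts₂ => exact ⟨t₂, ts₂, rfl⟩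
    have := goSS_tail w (t₂ :: ts₂) h'
    simp only [interleave, goSS, List.map_append, List.flatten_append, List.map_cons,
      List.flatten_cons, dec] at *
    simp only [← this]
    simp

theorem goSS_main (a : α) (w : List α) (t : List α) (ts : List (List α))
    (h : ts.length = w.length + 1) :
    ((interleave (t :: ts) (a :: w)).map fun x => Glo ++ x :: Ghi).flatten
      = interleave ((dec Glo Ghi t ++ Glo) :: goSS Glo Ghi ts) (a :: w) := by
  have := goSS_tail Glo Ghi w ts h
  simp only [interleave, List.map_append, List.flatten_append, dec] at *
  simp only [← this]
  simp

/-- The insertion on `u' = interleave ss u` (tail blocks). -/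
def mkD2 : List (List α) → List (List α) → List α → List (List α)
  | [s], [t], _ => blk [] (dec Glo Ghi t) s
  | s :: ss@(_ :: _), t :: ts, pre =>
      blk (Ghi ++ dec Glo Ghi t ++ pre) (ss.dropLast.flatten) s ++ mkD2 ss ts (pre ++ s)
  | _, _, _ => []

theorem mkD2_length : ∀ (ss ts : List (List α)) (pre : List α),
    ss.length = ts.length → ss ≠ [] →
    (mkD2 Glo Ghi ss ts pre).length = (ss.map (fun s => s.length + 1)).sum
  | [s], [t], pre, _, _ => by simp [mkD2, blk_length]
  | s :: s₂ :: ss, t :: ts, pre, h, _ => by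
    obtain ⟨t₂, ts₂, rfl⟩ : ∃ t₂ ts₂, ts = t₂ :: ts₂ := by
      cases ts with
      | nil => simp at h
      | cons t₂ ts₂ => exact ⟨t₂, ts₂, rfl⟩
    have h' : (s₂ :: ss).length = (t₂ :: ts₂).length := by simpa using h
    simp [mkD2, blk_length, mkD2_length (s₂ :: ss) (t₂ :: ts₂) (pre ++ s) h' (by simp)]
    try omega
  | [], _, _, _, hne => by simp at hne
  | [s], [], _, h, _ => by simp at h
  | [s], _ :: _ :: _, _, h, _ => by simp at h
  | s :: s₂ :: ss, [], _, h, _ => by simp at h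

theorem comp_mkD2 : ∀ (ss ts : List (List α)) (pre : List α),
    ss.length = ts.length →
    ss.getLast? = some Ghi →
    Glo = pre ++ ss.dropLast.flatten →
    comp (mkD2 Glo Ghi ss ts pre) ss = goSS Glo Ghi ts
  | [s], [t], pre, _, hlast, _ => by
    have hs : s = Ghi := by simpa using hlast
    have ht : (blk ([] : List α) (dec Glo Ghi t) s).take (s.length + 1)
        = blk [] (dec Glo Ghi t) s :=
      List.take_of_length_le (by simp [blk_length])
    rw [hs] at ht
    simp [comp, mkD2, goSS, ht, interleave_blk, hs]
  | s :: s₂ :: ss, t :: ts, pre, h, hlast, hGlo => by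
    obtain ⟨t₂, ts₂, rfl⟩ : ∃ t₂ ts₂, ts = t₂ :: ts₂ := by
      cases ts with
      | nil => simp at h
      | cons t₂ ts₂ => exact ⟨t₂, ts₂, rfl⟩
    have h' : (s₂ :: ss).length = (t₂ :: ts₂).length := by simpa using h
    have hlast' : (s₂ :: ss).getLast? = some Ghi := by
      rwa [List.getLast?_cons_cons] at hlast
    have hGlo' : Glo = (pre ++ s) ++ (s₂ :: ss).dropLast.flatten := by
      rw [hGlo]; simp
    have IH := comp_mkD2 (s₂ :: ss) (t₂ :: ts₂) (pre ++ s) h' hlast' hGlo'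
    have htake :
        (blk (Ghi ++ dec Glo Ghi t ++ pre) ((s₂ :: ss).dropLast.flatten) s
          ++ mkD2 Glo Ghi (s₂ :: ss) (t₂ :: ts₂) (pre ++ s)).take (s.length + 1)
        = blk (Ghi ++ dec Glo Ghi t ++ pre) ((s₂ :: ss).dropLast.flatten) s :=
      List.take_left' (blk_length _ _ _)
    have hdrop :
        (blk (Ghi ++ dec Glo Ghi t ++ pre) ((s₂ :: ss).dropLast.flatten) s
          ++ mkD2 Glo Ghi (s₂ :: ss) (t₂ :: ts₂) (pre ++ s)).drop (s.length + 1)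
        = mkD2 Glo Ghi (s₂ :: ss) (t₂ :: ts₂) (pre ++ s) :=
      List.drop_left' (blk_length _ _ _)
    have hentry : (Ghi ++ dec Glo Ghi t ++ pre) ++ s ++ (s₂ :: ss).dropLast.flatten
        = Ghi ++ dec Glo Ghi t ++ Glo := by
      rw [hGlo']; simp
    show comp _ _ = _
    rw [mkD2, comp, htake, hdrop, interleave_blk, IH, hentry]
    simp [goSS]
  | [], _, _, _, hlast, _ => by simp at hlast
  | [s], [], _, h, _, _ => by simp at h
  | [s], _ :: _ :: _, _, h, _, _ => by simp at h
  | s :: s₂ :: ss, [], _, h, _, _ => by simp at h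

end Deco

theorem sum_map_succ (ss : List (List α)) :
    (ss.map fun s => s.length + 1).sum = (ss.map List.length).sum + ss.length := by
  induction ss with
  | nil => simp
  | cons s ss ih => simp [ih]; omega

theorem flatten_map_isRotated {β : Type*} (f : α → List β) {l l' : List α}
    (h : l.IsRotated l') : ((l.map f).flatten).IsRotated ((l'.map f).flatten) := by
  obtain ⟨m, rfl⟩ := h
  rcases eq_or_ne l [] with rfl | hne
  · simp
  · have hpos : 0 < l.length := List.length_pos_iff.2 hne
    have hk : m % l.length ≤ l.length := (Nat.mod_lt _ hpos).le
    rw [← List.rotate_mod, List.rotate_eq_drop_append_take hk]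
    conv_lhs => rw [← List.take_append_drop (m % l.length) l]
    simp only [List.map_append, List.flatten_append]
    exact List.isRotated_append

end StmtAux

open StmtAux in
/-- Cyclic equalizability is invariant under simultaneous insertion. -/
theorem stmt_13 {α : Type*} (u v : List α) (hlen : u.length = v.length)
    (ss : List (List α)) (hss : ss.length = u.length + 1)
    (u' v' : List α) (hu' : u' = interleave ss u) (hv' : v' = interleave ss v) :
    CyclicallyEqualizable u v ↔ CyclicallyEqualizable u' v' := by
  subst hu' hv'
  constructor
  · rintro ⟨ts, hts, hrot⟩
    cases u with
    | nil =>
      obtain rfl : v = [] := by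
        cases v with
        | nil => rfl
        | cons b v₂ => simp at hlen
      exact ⟨List.replicate ((interleave ss ([] : List α)).length + 1) [],
        by simp, List.IsRotated.refl _⟩
    | cons a u₂ =>
      obtain ⟨b, v₂, rfl⟩ : ∃ b v₂, v = b :: v₂ := by
        cases v with
        | nil => simp at hlen
        | cons b v₂ => exact ⟨b, v₂, rfl⟩
      obtain ⟨s₀, s₁, ss₂, rfl⟩ : ∃ s₀ s₁ ss₂, ss = s₀ :: s₁ :: ss₂ := by
        cases ss with
        | nil => simp at hss
        | cons s₀ ss' =>
          cases ss' with
          | nil => simp at hss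
          | cons s₁ ss₂ => exact ⟨s₀, s₁, ss₂, rfl⟩
      obtain ⟨t₀, ts₂, rfl⟩ : ∃ t₀ ts₂, ts = t₀ :: ts₂ := by
        cases ts with
        | nil => simp at hts
        | cons t₀ ts₂ => exact ⟨t₀, ts₂, rfl⟩
      have hts₂ : ts₂.length = u₂.length + 1 := by simpa using hts
      have hss₂ : ss₂.length = u₂.length := by simpa using hss
      have hlen' : u₂.length = v₂.length := by simpa using hlen
      -- the global decoration words
      set Glo : List α := ((s₀ :: s₁ :: ss₂).dropLast).flatten with hGlodef
      obtain ⟨Ghi, hlast2⟩ : ∃ g, (s₁ :: ss₂).getLast? = some g := by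
        cases hgl : (s₁ :: ss₂).getLast? with
        | none => simp at hgl
        | some g => exact ⟨g, rfl⟩
      have hGloinv : Glo = s₀ ++ ((s₁ :: ss₂).dropLast).flatten := by
        rw [hGlodef]; simp
      have hlen12 : (s₁ :: ss₂).length = ts₂.length := by
        simp [hss₂, hts₂]
      -- the simultaneous insertion on (u', v')
      set B0 : List α := ((s₁ :: ss₂).dropLast).flatten with hB0
      set D : List (List α) :=
        blk (dec Glo Ghi t₀) B0 s₀ ++ mkD2 Glo Ghi (s₁ :: ss₂) ts₂ s₀ with hD
      have htake := List.take_left' (l₂ := mkD2 Glo Ghi (s₁ :: ss₂) ts₂ s₀)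
        (blk_length (dec Glo Ghi t₀) B0 s₀)
      have hdrop := List.drop_left' (l₂ := mkD2 Glo Ghi (s₁ :: ss₂) ts₂ s₀)
        (blk_length (dec Glo Ghi t₀) B0 s₀)
      have hentry : dec Glo Ghi t₀ ++ s₀ ++ B0 = dec Glo Ghi t₀ ++ Glo := by
        rw [hGloinv, hB0]; simp
      have hcomp : comp D (s₀ :: s₁ :: ss₂)
          = (dec Glo Ghi t₀ ++ Glo) :: goSS Glo Ghi ts₂ := by
        rw [hD, comp, htake, hdrop, interleave_blk, hentry,
          comp_mkD2 Glo Ghi (s₁ :: ss₂) ts₂ s₀ hlen12 hlast2 hGloinv]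
      have hlenD : D.length = (interleave (s₀ :: s₁ :: ss₂) (a :: u₂)).length + 1 := by
        have h1 := interleave_length (a :: u₂) (s₀ :: s₁ :: ss₂) hss
        have h2 := mkD2_length Glo Ghi (s₁ :: ss₂) ts₂ s₀ hlen12 (by simp)
        have h3 := sum_map_succ (α := α) (s₁ :: ss₂)
        rw [hD, List.length_append, blk_length, h2, h3, h1]
        simp
        omega
      have hlenDv : D.length = (interleave (s₀ :: s₁ :: ss₂) (b :: v₂)).length + 1 := by
        have h1 := interleave_length (a :: u₂) (s₀ :: s₁ :: ss₂) hss
        have h2 := interleave_length (b :: v₂) (s₀ :: s₁ :: ss₂)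
          (by rw [hss, hlen])
        omega
      have key1 : interleave D (interleave (s₀ :: s₁ :: ss₂) (a :: u₂))
          = ((interleave (t₀ :: ts₂) (a :: u₂)).map fun x => Glo ++ x :: Ghi).flatten := by
        rw [comp_spec (a :: u₂) _ D hss hlenD, hcomp,
          goSS_main Glo Ghi a u₂ t₀ ts₂ hts₂]
      have key2 : interleave D (interleave (s₀ :: s₁ :: ss₂) (b :: v₂))
          = ((interleave (t₀ :: ts₂) (b :: v₂)).map fun x => Glo ++ x :: Ghi).flatten := by
        rw [comp_spec (b :: v₂) _ D (by rw [hss, hlen]) hlenDv, hcomp,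
          goSS_main Glo Ghi b v₂ t₀ ts₂ (by rw [hts₂, hlen'])]
      exact ⟨D, hlenD, by
        rw [key1, key2]
        exact flatten_map_isRotated _ hrot⟩
  · rintro ⟨tt, htt, hrot⟩
    refine ⟨comp tt ss, by rw [comp_length, hss], ?_⟩
    have hlenv : (interleave ss v).length = (interleave ss u).length := by
      have h1 := interleave_length u ss hss
      have h2 := interleave_length v ss (by rw [hss, hlen])
      omega
    have e1 : interleave (comp tt ss) u = interleave tt (interleave ss u) :=
      (comp_spec u ss tt hss htt).symm
    have e2 : interleave (comp tt ss) v = interleave tt (interleave ss v) :=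
      (comp_spec v ss tt (by rw [hss, hlen]) (by rw [hlenv]; exact htt)).symm
    rw [e1, e2]
    exact hrot
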